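/- Let X be a uniform space and f : X → X a continuous map with the finite shadowing property. If f is chain transitive and for every entourage V there exists a V-small set A ⊆ X with cofinite return set N_f(A,A), then f is topologically mixing. -/

import Mathlib

/-- Uniform-space version: a continuous map with the finite shadowing property which is chain
transitive and admits, for every entourage V, a V-small set with cofinite return set, is
topologically mixing. -/
theorem stmt5 {X : Type*} [UniformSpace X] (f : X → X) (hf : Continuous f)
    (hshad : ∀ V ∈ uniformity X, ∃ U ∈ uniformity X, ∀ (k : ℕ) (x : ℕ → X),
        (∀ j < k, (f (x j), x (j + 1)) ∈ U) →
        ∃ y, ∀ j ≤ k, (x j, f^[j] y) ∈ V)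
    (hct : ∀ x y : X, ∀ V ∈ uniformity X, ∃ (k : ℕ) (c : ℕ → X),
        1 ≤ k ∧ c 0 = x ∧ c k = y ∧ ∀ j < k, (f (c j), c (j + 1)) ∈ V)
    (hret : ∀ V ∈ uniformity X, ∃ A : Set X, A ×ˢ A ⊆ V ∧
        {n : ℕ | (f^[n] '' A ∩ A).Nonempty}ᶜ.Finite) :
    ∀ A B : Set X, IsOpen A → IsOpen B → A.Nonempty → B.Nonempty →
      {n : ℕ | (f^[n] '' A ∩ B).Nonempty}ᶜ.Finite := by
  intro A B hA hB ⟨a, ha⟩ ⟨b, hb⟩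
  obtain ⟨VA, hVA, hVAsub⟩ := (UniformSpace.mem_nhds_iff).1 (hA.mem_nhds ha)
  obtain ⟨VB, hVB, hVBsub⟩ := (UniformSpace.mem_nhds_iff).1 (hB.mem_nhds hb)
  have hV : VA ∩ VB ∈ uniformity X := Filter.inter_mem hVA hVB
  obtain ⟨U, hU, hUshad⟩ := hshad (VA ∩ VB) hV
  obtain ⟨U', hU', hUU⟩ := comp_mem_uniformity_sets hU
  have hU'U : U' ⊆ U := fun z hz => by
    exact hUU (SetRel.prodMk_mem_comp hz (refl_mem_uniformity hU'))
  obtain ⟨S, hSsmall, hSfin⟩ := hret U' hU'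
  -- S is nonempty
  have hNinf : {n : ℕ | (f^[n] '' S ∩ S).Nonempty}.Infinite := by
    have := hSfin.infinite_compl
    simpa using this
  obtain ⟨n0, hn0⟩ := hNinf.nonempty
  obtain ⟨t, ht⟩ := hn0
  obtain ⟨s0, hs0, -⟩ := ht.1
  -- pick p ∈ S
  have hp : s0 ∈ S := hs0
  set p := s0
  obtain ⟨k1, c1, hk1, hc10, hc1k, hc1⟩ := hct a p U' hU'
  obtain ⟨k2, c2, hk2, hc20, hc2k, hc2⟩ := hct p b U' hU'
  -- key claim
  have key : ∀ n : ℕ, k1 + k2 + 1 ≤ n →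
      (f^[n - (k1 + k2)] '' S ∩ S).Nonempty → (f^[n] '' A ∩ B).Nonempty := by
    intro n hn hret'
    set m := n - (k1 + k2) with hm
    have hm1 : 1 ≤ m := by omega
    have hnm : n = k1 + m + k2 := by omega
    obtain ⟨t, ht1, ht2⟩ := hret'
    obtain ⟨s, hs, hst⟩ := ht1
    -- hst : f^[m] s = t, ht2 : t ∈ S
    have hfms : f^[m] s ∈ S := by rw [hst]; exact ht2
    -- define the chain
    set x : ℕ → X := fun j =>
      if j < k1 then c1 j else if j < k1 + m then f^[j - k1] s else c2 (j - (k1 + m)) with hx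
    have hx1 : ∀ j, j < k1 → x j = c1 j := by
      intro j hj; simp only [hx]; rw [if_pos hj]
    have hx2 : ∀ j, k1 ≤ j → j < k1 + m → x j = f^[j - k1] s := by
      intro j hj1 hj2; simp only [hx]; rw [if_neg (by omega), if_pos hj2]
    have hx3 : ∀ j, k1 + m ≤ j → x j = c2 (j - (k1 + m)) := by
      intro j hj; simp only [hx]; rw [if_neg (by omega), if_neg (by omega)]
    have hchain : ∀ j < n, (f (x j), x (j + 1)) ∈ U := by
      intro j hj
      by_cases h1 : j + 1 < k1
      · rw [hx1 j (by omega), hx1 (j + 1) h1]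
        exact hU'U (hc1 j (by omega))
      by_cases h2 : j + 1 = k1
      · rw [hx1 j (by omega), hx2 (j + 1) (by omega) (by omega)]
        have e1 : (f (c1 j), p) ∈ U' := by
          have := hc1 j (by omega); rwa [h2, hc1k] at this
        have e2 : (p, f^[j + 1 - k1] s) ∈ U' := by
          have : j + 1 - k1 = 0 := by omega
          rw [this]
          exact hSsmall (Set.mk_mem_prod hp hs)
        exact hUU (SetRel.prodMk_mem_comp e1 e2)
      have h3 : k1 ≤ j := by omega
      by_cases h4 : j + 1 < k1 + m
      · rw [hx2 j h3 (by omega), hx2 (j + 1) (by omega) h4]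
        have : f (f^[j - k1] s) = f^[j + 1 - k1] s := by
          rw [show j + 1 - k1 = (j - k1) + 1 by omega, Function.iterate_succ_apply']
        rw [this]
        exact refl_mem_uniformity hU
      by_cases h5 : j + 1 = k1 + m
      · rw [hx2 j h3 (by omega), hx3 (j + 1) (by omega)]
        have e1 : f (f^[j - k1] s) = f^[m] s := by
          rw [show m = (j - k1) + 1 by omega, Function.iterate_succ_apply']
        have e2 : j + 1 - (k1 + m) = 0 := by omega
        rw [e1, e2, hc20]
        exact hU'U (hSsmall (Set.mk_mem_prod hfms hp))
      · have h6 : k1 + m ≤ j := by omega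
        rw [hx3 j h6, hx3 (j + 1) (by omega)]
        rw [show j + 1 - (k1 + m) = (j - (k1 + m)) + 1 by omega]
        exact hU'U (hc2 (j - (k1 + m)) (by omega))
    obtain ⟨y, hy⟩ := hUshad n x hchain
    have hy0 : (a, y) ∈ VA ∩ VB := by
      have := hy 0 (Nat.zero_le n)
      rwa [hx1 0 (by omega), hc10, Function.iterate_zero_apply] at this
    have hyn : (b, f^[n] y) ∈ VA ∩ VB := by
      have := hy n le_rfl
      rwa [hx3 n (by omega), show n - (k1 + m) = k2 by omega, hc2k] at this
    have hyA : y ∈ A := hVAsub hy0.1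
    have hynB : f^[n] y ∈ B := hVBsub hyn.2
    exact ⟨f^[n] y, ⟨y, hyA, rfl⟩, hynB⟩
  -- conclude
  apply Set.Finite.subset
    ((Set.finite_Iio (k1 + k2 + 1)).union
      ((hSfin.image (· + (k1 + k2)))))
  intro n hn
  by_cases h : n < k1 + k2 + 1
  · exact Or.inl h
  · right
    refine ⟨n - (k1 + k2), ?_, show n - (k1 + k2) + (k1 + k2) = n by omega⟩
    intro hmem
    exact hn (key n (by omega) hmem)
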